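/- For each fixed x ≥ 0, lim_{α→1⁻} M_{α/2}(x) = (1/√π) e^{-x²/4}, where M_{α/2}(x) = ∑_{n≥0} (-x)^n / (n! Γ(-(α/2)n + 1 - α/2)). -/

import Mathlib

open Real
open scoped Topology

/-- The Wright function `W(z, α, β) = ∑_{n≥0} z^n / (n! Γ(αn + β))`
(with the convention `1/Γ = 0` at the poles of `Γ`). -/
noncomputable def wright (z α β : ℝ) : ℝ :=
  ∑' n : ℕ, z ^ n / ((Nat.factorial n : ℝ) * Real.Gamma (α * n + β))

/-- The Mainardi function `M_ν(z) = W(-z, -ν, 1-ν)`. -/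
noncomputable def mainardi (ν z : ℝ) : ℝ :=
  ∑' n : ℕ, (-z) ^ n / ((Nat.factorial n : ℝ) * Real.Gamma (-ν * n + 1 - ν))

/-- The Gauss error function `erf y = (2/√π) ∫₀^y e^{-t²} dt`. -/
noncomputable def erf (y : ℝ) : ℝ :=
  (2 / Real.sqrt π) * ∫ t in (0:ℝ)..y, Real.exp (-t ^ 2)


lemma continuous_invGamma : Continuous fun s : ℝ => (Real.Gamma s)⁻¹ := by
  have h : ∀ s : ℝ, (Real.Gamma s)⁻¹ = ((Complex.Gamma (s : ℂ))⁻¹).re := by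
    intro s
    rw [Complex.Gamma_ofReal, ← Complex.ofReal_inv, Complex.ofReal_re]
  simp_rw [h]
  exact Complex.continuous_re.comp
    (Complex.differentiable_one_div_Gamma.continuous.comp Complex.continuous_ofReal)

lemma abs_invGamma_one_sub_le {t : ℝ} (ht : 0 < t) :
    |(Real.Gamma (1 - t))⁻¹| ≤ Real.Gamma t / π := by
  have hΓt : 0 < Real.Gamma t := Real.Gamma_pos_of_pos ht
  by_cases h : Real.Gamma (1 - t) = 0
  · rw [h, inv_zero, abs_zero]
    positivity
  · have hrefl := Real.Gamma_mul_Gamma_one_sub t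
    have hsin : Real.sin (π * t) ≠ 0 := by
      intro hs
      rw [hs, div_zero] at hrefl
      exact h (by rcases mul_eq_zero.1 hrefl with h1 | h1
                  · exact absurd h1 hΓt.ne'
                  · exact h1)
    have : (Real.Gamma (1 - t))⁻¹ = Real.Gamma t * Real.sin (π * t) / π := by
      field_simp at hrefl ⊢
      have hs' : Real.sin (t * π) ≠ 0 := by rwa [mul_comm]
      rw [eq_div_iff hs'] at hrefl
      nlinarith [hrefl]
    rw [this, abs_div, abs_of_pos pi_pos, abs_mul, abs_of_pos hΓt]
    gcongr
    calc Real.Gamma t * |Real.sin (π * t)| ≤ Real.Gamma t * 1 := by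
          gcongr; exact abs_sin_le_one _
      _ = Real.Gamma t := mul_one _


lemma gamma_half_sub (k : ℕ) :
    Real.Gamma (1/2 - k) = (-4 : ℝ) ^ k * (Nat.factorial k) * Real.sqrt π /
      (Nat.factorial (2 * k)) := by
  induction k with
  | zero =>
    norm_num
    exact Real.Gamma_one_half_eq
  | succ k ih =>
    have hs : (1/2 - (k+1) : ℝ) ≠ 0 := by
      intro h
      have h2 : (k : ℝ) = -1/2 := by linarith
      have := Nat.cast_nonneg (α := ℝ) k
      linarith
    have key : Real.Gamma (1/2 - k) = (1/2 - (k+1)) * Real.Gamma (1/2 - (k+1)) := by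
      have := Real.Gamma_add_one hs
      rw [show (1/2 - (k+1) : ℝ) + 1 = 1/2 - k by push_cast; ring] at this
      exact this
    have hfact : (Nat.factorial (2 * (k+1)) : ℝ)
        = (2*k+2) * (2*k+1) * Nat.factorial (2*k) := by
      rw [show 2 * (k+1) = (2*k+1) + 1 by ring, Nat.factorial_succ,
        show 2*k+1 = (2*k) + 1 by ring, Nat.factorial_succ]
      push_cast; ring
    have h2 : Real.Gamma (1/2 - (k+1)) = Real.Gamma (1/2 - k) / (1/2 - (k+1)) := by
      rw [key, mul_div_cancel_left₀ _ hs]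
    have hd1 : ((Nat.factorial (2*k) : ℝ)) * (1/2 - (k+1)) ≠ 0 := by
      apply mul_ne_zero _ hs
      positivity
    have hd2 : (Nat.factorial (2 * (k+1)) : ℝ) ≠ 0 := by positivity
    rw [show ((k+1 : ℕ) : ℝ) = (k : ℝ) + 1 by push_cast; ring, h2, ih,
      div_div, div_eq_div_iff hd1 hd2, hfact, Nat.factorial_succ]
    push_cast
    ring


lemma sum_range_two_mul (h : ℕ → ℝ) (N : ℕ) :
    ∑ n ∈ Finset.range (2 * N), h (n / 2) = 2 * ∑ k ∈ Finset.range N, h k := by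
  induction N with
  | zero => simp
  | succ N ih =>
    rw [show 2 * (N + 1) = (2 * N + 1) + 1 by ring, Finset.sum_range_succ,
      Finset.sum_range_succ, ih, Finset.sum_range_succ,
      show (2 * N + 1) / 2 = N by omega, show (2 * N) / 2 = N by omega]
    ring

lemma summable_comp_div_two {h : ℕ → ℝ} (h0 : ∀ k, 0 ≤ h k) (hs : Summable h) :
    Summable fun n => h (n / 2) := by
  apply summable_of_sum_range_le (c := 2 * ∑' k, h k) (fun n => h0 _)
  intro N
  calc ∑ n ∈ Finset.range N, h (n / 2)
      ≤ ∑ n ∈ Finset.range (2 * N), h (n / 2) := by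
        apply Finset.sum_le_sum_of_subset_of_nonneg
        · exact Finset.range_subset_range.2 (by omega)
        · intro i _ _; exact h0 _
    _ = 2 * ∑ k ∈ Finset.range N, h k := sum_range_two_mul h N
    _ ≤ 2 * ∑' k, h k := by
        have := Summable.sum_le_tsum (Finset.range N) (fun i _ => h0 i) hs
        linarith

lemma summable_dom (x : ℝ) (hx : 0 ≤ x) :
    Summable fun n : ℕ =>
      x ^ n / (Nat.factorial n) * ((Real.Gamma (3/8) + Nat.factorial (n / 2)) / π) := by
  have h1 : Summable fun n : ℕ => x ^ n / (Nat.factorial n) * (Real.Gamma (3/8) / π) :=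
    (Real.summable_pow_div_factorial x).mul_right _
  have h2 : Summable fun n : ℕ => x ^ n * (Nat.factorial (n/2)) / (Nat.factorial n) / π := by
    apply Summable.of_nonneg_of_le
      (f := fun n => (1 + x) / π * ((x^2) ^ (n / 2) / Nat.factorial (n/2)))
    · intro n; positivity
    · intro n
      set f : ℝ := (Nat.factorial (n/2) : ℝ) with hf
      set m := n / 2
      have hfpos : (0:ℝ) < f := by positivity
      have hfle : f * f ≤ (Nat.factorial n : ℝ) := by
        have hd : Nat.factorial m * Nat.factorial (n - m) ∣ Nat.factorial n := by
          have := Nat.factorial_mul_factorial_dvd_factorial_add m (n - m)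
          rwa [show m + (n - m) = n by omega] at this
        have hle2 : Nat.factorial m * Nat.factorial m
            ≤ Nat.factorial m * Nat.factorial (n - m) :=
          Nat.mul_le_mul_left _ (Nat.factorial_le (by omega))
        rw [hf]; exact_mod_cast hle2.trans (Nat.le_of_dvd (Nat.factorial_pos n) hd)
      have hxn : x ^ n ≤ (1 + x) * (x^2) ^ m := by
        have hx0 : x ^ n = (x^2) ^ m * x ^ (n % 2) := by
          rw [← pow_mul, ← pow_add]
          congr 1
          omega
        rw [hx0]
        have hx2 : (0:ℝ) ≤ (x^2) ^ m := by positivity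
        rcases Nat.mod_two_eq_zero_or_one n with h | h <;> rw [h] <;> nlinarith
      have key : x ^ n * (f * f) ≤ ((1 + x) * (x^2) ^ m) * (Nat.factorial n : ℝ) :=
        mul_le_mul hxn hfle (by positivity) (by positivity)
      rw [div_div, div_le_iff₀ (by positivity)]
      have h3 : (1+x)/π * ((x^2)^m/f) * ((Nat.factorial n : ℝ) * π)
          = (1+x)*(x^2)^m*(Nat.factorial n : ℝ)/f := by
        field_simp
      rw [h3, le_div_iff₀ hfpos]
      calc x ^ n * f * f = x ^ n * (f * f) := by ring
        _ ≤ ((1 + x) * (x^2) ^ m) * (Nat.factorial n : ℝ) := key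
        _ = (1 + x) * (x^2) ^ m * (Nat.factorial n : ℝ) := by ring
    · exact ((summable_comp_div_two (fun k => by positivity)
        (Real.summable_pow_div_factorial (x^2)))).mul_left _
  have h12 := h1.add h2
  apply h12.congr
  intro n
  have : (0:ℝ) < Nat.factorial n := by positivity
  field_simp



lemma tsum_half (x : ℝ) :
    ∑' n : ℕ, (-x) ^ n / ((Nat.factorial n : ℝ) * Real.Gamma (-(1/2 : ℝ) * n + 1 - 1/2))
      = (1 / Real.sqrt π) * Real.exp (-x ^ 2 / 4) := by
  set a : ℕ → ℝ := fun n =>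
    (-x) ^ n / ((Nat.factorial n : ℝ) * Real.Gamma (-(1/2 : ℝ) * n + 1 - 1/2)) with ha
  have hsqrt : (0:ℝ) < Real.sqrt π := Real.sqrt_pos.2 pi_pos
  have heven : ∀ k : ℕ, a (2 * k) = (1 / Real.sqrt π) * ((-x ^ 2 / 4) ^ k / Nat.factorial k) := by
    intro k
    have harg : (-(1/2 : ℝ) * ((2 * k : ℕ) : ℝ) + 1 - 1/2) = 1/2 - k := by push_cast; ring
    have h2k : ((Nat.factorial (2 * k) : ℝ)) ≠ 0 := by positivity
    have hkf : ((Nat.factorial k : ℝ)) ≠ 0 := by positivity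
    have h4 : ((-4 : ℝ)) ^ k ≠ 0 := pow_ne_zero _ (by norm_num)
    have hden : ((Nat.factorial (2 * k) : ℝ)) * Real.Gamma (1/2 - k)
        = (-4 : ℝ) ^ k * (Nat.factorial k) * Real.sqrt π := by
      rw [gamma_half_sub k, mul_div_cancel₀ _ h2k]
    have hxx : (-x) ^ (2 * k) = (x ^ 2) ^ k := by
      rw [pow_mul]; congr 1; ring
    have hmul : (-x ^ 2 / 4) ^ k * (-4 : ℝ) ^ k = (x ^ 2) ^ k := by
      rw [← mul_pow]; congr 1; ring
    have hr : (1 / Real.sqrt π) * ((-x ^ 2 / 4) ^ k / Nat.factorial k)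
        = (-x ^ 2 / 4) ^ k / (Real.sqrt π * Nat.factorial k) := by
      rw [div_mul_div_comm, one_mul]
    rw [ha]
    simp only
    rw [harg, hden, hxx, hr,
      div_eq_div_iff (mul_ne_zero (mul_ne_zero h4 hkf) hsqrt.ne')
        (mul_ne_zero hsqrt.ne' hkf)]
    rw [← hmul]; ring
  have hodd : ∀ k : ℕ, a (2 * k + 1) = 0 := by
    intro k
    have harg : (-(1/2 : ℝ) * ((2 * k + 1 : ℕ) : ℝ) + 1 - 1/2) = -(k : ℝ) := by
      push_cast; ring
    rw [ha]
    simp only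
    rw [harg, Real.Gamma_neg_nat_eq_zero, mul_zero, div_zero]
  have he : Summable fun k => a (2 * k) :=
    (((Real.summable_pow_div_factorial (-x ^ 2 / 4)).mul_left (1 / Real.sqrt π))).congr
      fun k => (heven k).symm
  have ho : Summable fun k => a (2 * k + 1) :=
    summable_zero.congr fun k => (hodd k).symm
  rw [← tsum_even_add_odd he ho, tsum_congr hodd, tsum_zero, add_zero, tsum_congr heven,
    tsum_mul_left]
  congr 1
  rw [Real.exp_eq_exp_ℝ, NormedSpace.exp_eq_tsum_div]

/-- For each fixed `x ≥ 0`, `M_{α/2}(x) → (1/√π) e^{-x²/4}` as `α → 1⁻`. -/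
theorem mainardi_tendsto_gaussian (x : ℝ) (hx : 0 ≤ x) :
    Filter.Tendsto (fun α : ℝ => mainardi (α / 2) x)
      (nhdsWithin 1 (Set.Iio 1))
      (nhds ((1 / Real.sqrt π) * Real.exp (-x ^ 2 / 4))) := by
  set l := nhdsWithin (1:ℝ) (Set.Iio 1) with hl
  set f : ℝ → ℕ → ℝ := fun α n =>
    (-x) ^ n / ((Nat.factorial n : ℝ) * Real.Gamma (-(α/2) * n + 1 - α/2)) with hf
  have hfeq : ∀ α n, f α n
      = (-x) ^ n / (Nat.factorial n : ℝ) * (Real.Gamma (-(α/2) * n + 1 - α/2))⁻¹ := by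
    intro α n
    rw [hf]
    simp only
    rw [div_eq_mul_inv, mul_inv, ← mul_assoc]
    ring
  -- pointwise limits
  have hlim : ∀ n : ℕ, Filter.Tendsto (fun α => f α n) l (𝓝 (f 1 n)) := by
    intro n
    have hc : Continuous fun α : ℝ =>
        (-x) ^ n / (Nat.factorial n : ℝ) * (Real.Gamma (-(α/2) * n + 1 - α/2))⁻¹ := by
      apply continuous_const.mul
      exact continuous_invGamma.comp (by continuity)
    have := (hc.tendsto 1).mono_left (nhdsWithin_le_nhds (s := Set.Iio (1:ℝ)))
    simp only [← hfeq] at this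
    exact this
  -- dominating function
  set g : ℕ → ℝ := fun n =>
    x ^ n / (Nat.factorial n) * ((Real.Gamma (3/8) + Nat.factorial (n / 2)) / π) with hg
  have hbound : ∀ᶠ α in l, ∀ n : ℕ, ‖f α n‖ ≤ g n := by
    have hA : ∀ᶠ α in l, (3/4:ℝ) < α :=
      (eventually_gt_nhds (by norm_num : (3/4:ℝ) < 1)).filter_mono nhdsWithin_le_nhds
    have hB : ∀ᶠ α in l, α < (1:ℝ) := by
      have : Set.Iio (1:ℝ) ∈ l := self_mem_nhdsWithin
      filter_upwards [this] with α hα using hα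
    filter_upwards [hA, hB] with α h34 h1 n
    have harg : -(α/2) * (n:ℝ) + 1 - α/2 = 1 - (α/2) * ((n:ℝ) + 1) := by ring
    set t := (α/2) * ((n:ℝ) + 1) with hT
    have hn1 : (1:ℝ) ≤ (n:ℝ) + 1 := by
      have : (0:ℝ) ≤ n := Nat.cast_nonneg n
      linarith
    have ht0 : 0 < t := by
      apply mul_pos (by linarith) (by linarith)
    have ht38 : (3/8:ℝ) ≤ t := by
      calc (3/8:ℝ) = (3/8) * 1 := by norm_num
        _ ≤ (α/2) * ((n:ℝ) + 1) := by
            apply mul_le_mul (by linarith) hn1 (by norm_num) (by linarith)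
    have hnn : ((n:ℝ) + 1) / 2 ≤ ((n/2 : ℕ) : ℝ) + 1 := by
      have h2 : n ≤ 2 * (n/2) + 1 := by omega
      have h2' : (n:ℝ) ≤ 2 * ((n/2 : ℕ) : ℝ) + 1 := by exact_mod_cast h2
      linarith
    have htm : t ≤ ((n/2 : ℕ) : ℝ) + 1 := by
      calc t ≤ (1/2) * ((n:ℝ) + 1) := by
            apply mul_le_mul_of_nonneg_right (by linarith) (by linarith)
        _ = ((n:ℝ) + 1) / 2 := by ring
        _ ≤ ((n/2 : ℕ) : ℝ) + 1 := hnn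
    have hGt : Real.Gamma t ≤ Real.Gamma (3/8) + Nat.factorial (n/2) := by
      have hmax := Real.convexOn_Gamma.le_max_of_mem_Icc
        (x := (3/8:ℝ)) (y := ((n/2 : ℕ) : ℝ) + 1)
        (by norm_num : (3/8:ℝ) ∈ Set.Ioi (0:ℝ))
        (Set.mem_Ioi.2 (by positivity) : ((n/2 : ℕ) : ℝ) + 1 ∈ Set.Ioi (0:ℝ))
        (Set.mem_Icc.2 ⟨ht38, htm⟩)
      have hfact : Real.Gamma (((n/2 : ℕ) : ℝ) + 1) = Nat.factorial (n/2) :=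
        Real.Gamma_nat_eq_factorial (n/2)
      rw [hfact] at hmax
      have hg1 : (0:ℝ) < Real.Gamma (3/8) := Real.Gamma_pos_of_pos (by norm_num)
      have hg2 : (0:ℝ) < (Nat.factorial (n/2) : ℝ) := by positivity
      calc Real.Gamma t ≤ max (Real.Gamma (3/8)) ((Nat.factorial (n/2) : ℝ)) := hmax
        _ ≤ Real.Gamma (3/8) + Nat.factorial (n/2) :=
            max_le (by linarith) (by linarith)
    have hnorm : ‖f α n‖ = x ^ n / (Nat.factorial n : ℝ)
        * |(Real.Gamma (1 - t))⁻¹| := by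
      rw [hfeq, harg, Real.norm_eq_abs, abs_mul, abs_div, abs_pow, abs_neg,
        abs_of_nonneg hx, Nat.abs_cast]
    rw [hnorm, hg]
    simp only
    have hx1 : (0:ℝ) ≤ x ^ n / (Nat.factorial n : ℝ) := by positivity
    apply mul_le_mul_of_nonneg_left _ hx1
    calc |(Real.Gamma (1 - t))⁻¹| ≤ Real.Gamma t / π := abs_invGamma_one_sub_le ht0
      _ ≤ (Real.Gamma (3/8) + Nat.factorial (n/2)) / π := by gcongr
  have key := tendsto_tsum_of_dominated_convergence (summable_dom x hx) hlim hbound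
  have hval : (∑' n, f 1 n) = 1 / Real.sqrt π * Real.exp (-x ^ 2 / 4) := by
    rw [hf]
    simp only
    rw [← tsum_half x]
  rw [← hval]
  exact key
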